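/- Let n ≥ 2, θ ∈ ℝ, and let u be a twice continuously differentiable function on 𝔹. Then on 𝔹 one has L_θ[M^{1+2θ}[u]] = M^{1+2θ}[L_{-θ-1}[u]]. -/

import Mathlib

open MeasureTheory
open scoped BigOperators ENNReal Classical

noncomputable section

/-- Euclidean space `ℝⁿ`. -/
abbrev E (n : ℕ) := EuclideanSpace ℝ (Fin n)

/-- The open unit ball of `ℝⁿ`. -/
def unitBall (n : ℕ) : Set (E n) := Metric.ball 0 1

/-- The Laplacian `Δf = ∑ ∂²f/∂xᵢ²`. -/
def lap {n : ℕ} (f : E n → ℂ) (x : E n) : ℂ :=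
  ∑ i : Fin n,
    fderiv ℝ (fun y => fderiv ℝ f y (EuclideanSpace.single i 1)) x (EuclideanSpace.single i 1)

/-- The `N`-th iterate `Δ^N` of the Laplacian. -/
def lapIter {n : ℕ} (N : ℕ) (f : E n → ℂ) : E n → ℂ := lap^[N] f

/-- The radial derivative `R[u](x) = x ⋅ ∇u(x)`. -/
def radialDeriv {n : ℕ} (f : E n → ℂ) (x : E n) : ℂ := fderiv ℝ f x x

/-- The operator `L_θ[u] = (1-|x|²) Δu + 4θ R[u] + 2θ(n-2-2θ) u`. -/
def Lop {n : ℕ} (θ : ℝ) (f : E n → ℂ) (x : E n) : ℂ :=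
  ((1 - ‖x‖ ^ 2 : ℝ) : ℂ) * lap f x + ((4 * θ : ℝ) : ℂ) * radialDeriv f x
    + ((2 * θ * ((n : ℝ) - 2 - 2 * θ) : ℝ) : ℂ) * f x

/-- The multiplication operator `M^j[u](x) = (1-|x|²)^j u(x)` for integer `j`. -/
def Mnat {n : ℕ} (j : ℕ) (f : E n → ℂ) (x : E n) : ℂ :=
  (((1 - ‖x‖ ^ 2) ^ j : ℝ) : ℂ) * f x

/-- The multiplication operator `M^λ[u](x) = (1-|x|²)^λ u(x)` for real `λ`. -/
def Mr {n : ℕ} (lam : ℝ) (f : E n → ℂ) (x : E n) : ℂ :=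
  (((1 - ‖x‖ ^ 2) ^ lam : ℝ) : ℂ) * f x

/-- `u` is `N`-harmonic on the unit ball: `u` is `C^{2N}` there and `Δ^N u = 0`. -/
def NHarm (n N : ℕ) (u : E n → ℂ) : Prop :=
  ContDiffOn ℝ (2 * N : ℕ) u (unitBall n) ∧ ∀ x ∈ unitBall n, lapIter N u x = 0

/-- `‖u‖_{p,α}^p = ∫_𝔹 |u|^p (1-|x|²)^α dV`, as a lower integral. -/
def wInt (n : ℕ) (p α : ℝ) (u : E n → ℂ) : ℝ≥0∞ :=
  ∫⁻ x in unitBall n, ENNReal.ofReal (‖u x‖ ^ p * (1 - ‖x‖ ^ 2) ^ α)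

/-- Membership in `PH^p_{N,α}(𝔹)`. -/
def memPH (n N : ℕ) (p α : ℝ) (u : E n → ℂ) : Prop :=
  NHarm n N u ∧ wInt n p α u < ⊤

/-- The quantities `b_{j,N}(p)`. -/
def bCoef (n N j : ℕ) (p : ℝ) : ℝ :=
  if j = 0 then -1 - ((N : ℝ) - 1) * p
  else max (-1 - ((N : ℝ) + (j : ℝ) - 1) * p) (-(n : ℝ) - ((N : ℝ) - (j : ℝ) - (n : ℝ) + 1) * p)

/-- The quantities `a_{j,N}(p)`. -/
def aCoef (n N j : ℕ) (p : ℝ) : ℝ :=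
  min (bCoef n N j p) (-1 - ((N : ℝ) - (j : ℝ)) * p)

end

noncomputable section Aux5
variable {n : ℕ}

lemma pos_of_mem_ball {x : E n} (hx : x ∈ unitBall n) : (0:ℝ) < 1 - ‖x‖^2 := by
  have : ‖x‖ < 1 := by simpa [unitBall] using hx
  nlinarith [norm_nonneg x]

lemma hasFDerivAt_q (x : E n) :
    HasFDerivAt (fun y : E n => 1 - ‖y‖^2) (-(2 • (innerSL ℝ x))) x := by
  have h := ((hasFDerivAt_const (1:ℝ) x).sub (hasFDerivAt_id x).norm_sq)
  simp at h
  exact h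

lemma hasFDerivAt_W (lam : ℝ) (x : E n) (hx : (0:ℝ) < 1 - ‖x‖^2) :
    HasFDerivAt (fun y : E n => (((1 - ‖y‖^2) ^ lam : ℝ) : ℂ))
      (Complex.ofRealCLM ∘L ((lam * (1 - ‖x‖^2) ^ (lam-1)) • (-(2 • (innerSL ℝ x))))) x :=
  Complex.ofRealCLM.hasFDerivAt.comp x ((hasFDerivAt_q x).rpow_const (Or.inl hx.ne'))

lemma hasFDerivAt_Mr (lam : ℝ) (u : E n → ℂ) (x : E n) (hx : (0:ℝ) < 1 - ‖x‖^2)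
    (hu : DifferentiableAt ℝ u x) :
    HasFDerivAt (Mr lam u)
      ((((1 - ‖x‖^2)^lam : ℝ) : ℂ) • fderiv ℝ u x
        + u x • (Complex.ofRealCLM ∘L ((lam * (1 - ‖x‖^2) ^ (lam-1)) • (-(2 • (innerSL ℝ x)))))) x :=
  (hasFDerivAt_W lam x hx).mul hu.hasFDerivAt

lemma fderiv_Mr_apply (lam : ℝ) (u : E n → ℂ) {x : E n} (hx : (0:ℝ) < 1 - ‖x‖^2)
    (hu : DifferentiableAt ℝ u x) (v : E n) :
    fderiv ℝ (Mr lam u) x v = (((1 - ‖x‖^2)^lam : ℝ) : ℂ) * fderiv ℝ u x v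
      + (((-(2*lam)) * (inner ℝ x v : ℝ) * (1 - ‖x‖^2) ^ (lam-1) : ℝ) : ℂ) * u x := by
  rw [(hasFDerivAt_Mr lam u x hx hu).fderiv]
  simp [ContinuousLinearMap.smul_apply, smul_eq_mul, innerSL_apply_apply]
  ring

lemma diffAt_of_ball (u : E n → ℂ) (hu : ContDiffOn ℝ 2 u (unitBall n)) {y : E n}
    (hy : y ∈ unitBall n) : DifferentiableAt ℝ u y :=
  ((hu.contDiffAt (Metric.isOpen_ball.mem_nhds hy)).differentiableAt (by norm_num))

-- second derivative, per coordinate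
lemma fderiv2_Mr (lam : ℝ) (u : E n → ℂ) {x : E n} (hx : x ∈ unitBall n)
    (hu : ContDiffOn ℝ 2 u (unitBall n)) (i : Fin n) :
    fderiv ℝ (fun y => fderiv ℝ (Mr lam u) y (EuclideanSpace.single i 1)) x
        (EuclideanSpace.single i 1)
      = (((1 - ‖x‖^2)^lam : ℝ) : ℂ) *
          fderiv ℝ (fun y => fderiv ℝ u y (EuclideanSpace.single i 1)) x
            (EuclideanSpace.single i 1)
        + 2 * (((-(2*lam)) * x i * (1 - ‖x‖^2) ^ (lam-1) : ℝ) : ℂ) *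
            fderiv ℝ u x (EuclideanSpace.single i 1)
        + ((((-(2*lam)) * (1 - ‖x‖^2) ^ (lam-1)
            + 4*lam*(lam-1) * (x i)^2 * (1 - ‖x‖^2) ^ (lam-2) : ℝ)) : ℂ) * u x := by
  set e : E n := EuclideanSpace.single i 1 with he
  have hxp : (0:ℝ) < 1 - ‖x‖^2 := pos_of_mem_ball hx
  -- the formula function
  set F : E n → ℂ := fun y => (((1 - ‖y‖^2)^lam : ℝ) : ℂ) * fderiv ℝ u y e
      + (((-(2*lam)) * y i * (1 - ‖y‖^2) ^ (lam-1) : ℝ) : ℂ) * u y with hF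
  have heq : (fun y => fderiv ℝ (Mr lam u) y e) =ᶠ[nhds x] F := by
    filter_upwards [Metric.isOpen_ball.mem_nhds hx] with y hy
    have := fderiv_Mr_apply lam u (pos_of_mem_ball hy) (diffAt_of_ball u hu hy) e
    rw [this, hF]
    have : (inner ℝ y e : ℝ) = y i := by
      simp [he, EuclideanSpace.inner_single_right]
    rw [this]
  rw [heq.fderiv_eq]
  -- differentiability of the pieces
  have hcd : ContDiffAt ℝ 2 u x := hu.contDiffAt (Metric.isOpen_ball.mem_nhds hx)
  have hg : DifferentiableAt ℝ (fun y => fderiv ℝ u y e) x := by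
    have h1 : ContDiffAt ℝ 1 (fderiv ℝ u) x := hcd.fderiv_right (by norm_num)
    exact (h1.differentiableAt (by norm_num)).clm_apply (differentiableAt_const _)
  have hW := hasFDerivAt_W lam x hxp
  -- derivative of the real factor b y = (-(2*lam)) * y i * (1-‖y‖²)^(lam-1)
  have hproj : HasFDerivAt (fun y : E n => (-(2*lam)) * y i)
      ((-(2*lam)) • (EuclideanSpace.proj i : E n →L[ℝ] ℝ)) x := by
    exact ((EuclideanSpace.proj i : E n →L[ℝ] ℝ).hasFDerivAt (x := x)).const_mul _
  have hr : HasFDerivAt (fun y : E n => (1 - ‖y‖^2) ^ (lam-1))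
      (((lam-1) * (1 - ‖x‖^2) ^ (lam-1-1)) • (-((2:ℕ) • (innerSL ℝ x)) : E n →L[ℝ] ℝ)) x :=
    (hasFDerivAt_q x).rpow_const (Or.inl hxp.ne')
  have hb := hproj.mul hr
  have hB : HasFDerivAt (fun y : E n => (((-(2*lam)) * y i * (1 - ‖y‖^2) ^ (lam-1) : ℝ) : ℂ))
      (Complex.ofRealCLM ∘L (((-(2*lam)) * x i) • (((lam-1) * (1 - ‖x‖^2) ^ (lam-1-1)) • (-((2:ℕ) • (innerSL ℝ x)) : E n →L[ℝ] ℝ))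
        + ((1 - ‖x‖^2) ^ (lam-1)) • ((-(2*lam)) • (EuclideanSpace.proj i : E n →L[ℝ] ℝ)))) x :=
    Complex.ofRealCLM.hasFDerivAt.comp x hb
  have hFd : HasFDerivAt F
      ((((1 - ‖x‖^2)^lam : ℝ) : ℂ) • fderiv ℝ (fun y => fderiv ℝ u y e) x
        + fderiv ℝ u x e • (Complex.ofRealCLM ∘L ((lam * (1 - ‖x‖^2) ^ (lam-1)) • (-(2 • (innerSL ℝ x)))))
       + ((((-(2*lam)) * x i * (1 - ‖x‖^2) ^ (lam-1) : ℝ) : ℂ) • fderiv ℝ u x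
        + u x • (Complex.ofRealCLM ∘L (((-(2*lam)) * x i) • (((lam-1) * (1 - ‖x‖^2) ^ (lam-1-1)) • (-((2:ℕ) • (innerSL ℝ x)) : E n →L[ℝ] ℝ))
            + ((1 - ‖x‖^2) ^ (lam-1)) • ((-(2*lam)) • (EuclideanSpace.proj i : E n →L[ℝ] ℝ)))))) x :=
    (hW.mul hg.hasFDerivAt).add (hB.mul (diffAt_of_ball u hu hx).hasFDerivAt)
  rw [hFd.fderiv]
  have h1 : (inner ℝ x e : ℝ) = x i := by simp [he, EuclideanSpace.inner_single_right]
  have h2 : (EuclideanSpace.proj i : E n →L[ℝ] ℝ) e = 1 := by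
    simp [he]
  simp [ContinuousLinearMap.smul_apply, smul_eq_mul, innerSL_apply_apply, h1, h2,
    ContinuousLinearMap.add_apply, ContinuousLinearMap.comp_apply]
  push_cast
  ring_nf

lemma sum_single (x : E n) : ∑ i, x i • EuclideanSpace.single i (1:ℝ) = x := by
  simpa [EuclideanSpace.basisFun_apply, EuclideanSpace.basisFun_repr]
    using (EuclideanSpace.basisFun (Fin n) ℝ).sum_repr x

lemma fderiv_apply_self (u : E n → ℂ) (x : E n) :
    fderiv ℝ u x x = ∑ i, (x i : ℂ) * fderiv ℝ u x (EuclideanSpace.single i 1) := by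
  have h : fderiv ℝ u x (∑ i, x i • EuclideanSpace.single i (1:ℝ))
      = ∑ i, (x i : ℂ) * fderiv ℝ u x (EuclideanSpace.single i 1) := by
    rw [map_sum]
    simp
  rw [← h, sum_single]

lemma norm_sq_eq_sum (x : E n) : ‖x‖^2 = ∑ i, (x i)^2 := by
  rw [EuclideanSpace.norm_eq, Real.sq_sqrt (by positivity)]
  simp [sq]

lemma sum_identity {n : ℕ} (c1 c2 c3 c4 U : ℂ) (xv g h : Fin n → ℂ) :
    ∑ i, (c1 * h i + c2 * (xv i * g i) + (c3 + c4 * xv i ^ 2) * U)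
      = c1 * (∑ i, h i) + c2 * (∑ i, xv i * g i)
        + ((n : ℂ) * c3 + c4 * ∑ i, xv i ^ 2) * U := by
  rw [Finset.sum_add_distrib, Finset.sum_add_distrib, ← Finset.mul_sum, ← Finset.mul_sum,
    ← Finset.sum_mul, Finset.sum_add_distrib, Finset.sum_const, Finset.card_univ,
    Fintype.card_fin, ← Finset.mul_sum]
  push_cast
  ring

lemma lap_Mr (lam : ℝ) (u : E n → ℂ) {x : E n} (hx : x ∈ unitBall n)
    (hu : ContDiffOn ℝ 2 u (unitBall n)) :
    lap (Mr lam u) x = (((1 - ‖x‖^2)^lam : ℝ) : ℂ) * lap u x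
      - (((4*lam) * (1 - ‖x‖^2) ^ (lam-1) : ℝ) : ℂ) * radialDeriv u x
      + ((((-(2*(n:ℝ)*lam)) * (1 - ‖x‖^2) ^ (lam-1)
          + 4*lam*(lam-1) * ‖x‖^2 * (1 - ‖x‖^2) ^ (lam-2) : ℝ)) : ℂ) * u x := by
  unfold lap radialDeriv
  rw [Finset.sum_congr rfl (fun i _ => fderiv2_Mr lam u hx hu i)]
  rw [Finset.sum_congr rfl (fun i (_ : i ∈ Finset.univ) =>
    (show (((1 - ‖x‖^2)^lam : ℝ) : ℂ) *
          fderiv ℝ (fun y => fderiv ℝ u y (EuclideanSpace.single i 1)) x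
            (EuclideanSpace.single i 1)
        + 2 * (((-(2*lam)) * x i * (1 - ‖x‖^2) ^ (lam-1) : ℝ) : ℂ) *
            fderiv ℝ u x (EuclideanSpace.single i 1)
        + ((((-(2*lam)) * (1 - ‖x‖^2) ^ (lam-1)
            + 4*lam*(lam-1) * (x i)^2 * (1 - ‖x‖^2) ^ (lam-2) : ℝ)) : ℂ) * u x
      = (((1 - ‖x‖^2)^lam : ℝ) : ℂ) *
          fderiv ℝ (fun y => fderiv ℝ u y (EuclideanSpace.single i 1)) x
            (EuclideanSpace.single i 1)
        + (((-(4*lam)) * (1 - ‖x‖^2) ^ (lam-1) : ℝ) : ℂ) *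
            ((x i : ℂ) * fderiv ℝ u x (EuclideanSpace.single i 1))
        + ((((-(2*lam)) * (1 - ‖x‖^2) ^ (lam-1) : ℝ) : ℂ)
            + (((4*lam*(lam-1)) * (1 - ‖x‖^2) ^ (lam-2) : ℝ) : ℂ) * (x i : ℂ)^2) * u x
      by push_cast; ring))]
  rw [sum_identity, fderiv_apply_self u x, norm_sq_eq_sum]
  push_cast
  ring

lemma radial_Mr (lam : ℝ) (u : E n → ℂ) {x : E n} (hx : x ∈ unitBall n)
    (hu : ContDiffOn ℝ 2 u (unitBall n)) :
    radialDeriv (Mr lam u) x = (((1 - ‖x‖^2)^lam : ℝ) : ℂ) * radialDeriv u x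
      + (((-(2*lam)) * ‖x‖^2 * (1 - ‖x‖^2) ^ (lam-1) : ℝ) : ℂ) * u x := by
  unfold radialDeriv
  rw [fderiv_Mr_apply lam u (pos_of_mem_ball hx) (diffAt_of_ball u hu hx) x]
  rw [real_inner_self_eq_norm_sq]

end Aux5

/-- `L_θ M^{1+2θ} = M^{1+2θ} L_{-θ-1}`. -/
theorem stmt5 (n : ℕ) (hn : 2 ≤ n) (θ : ℝ) (u : E n → ℂ)
    (hu : ContDiffOn ℝ 2 u (unitBall n)) :
    ∀ x ∈ unitBall n,
      Lop θ (Mr (1 + 2 * θ) u) x = Mr (1 + 2 * θ) (Lop (-θ - 1) u) x := by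
  intro x hx
  have ht : (0:ℝ) < 1 - ‖x‖^2 := pos_of_mem_ball hx
  unfold Lop
  rw [lap_Mr (1 + 2*θ) u hx hu, radial_Mr (1 + 2*θ) u hx hu]
  unfold Mr
  have h2 : (1 - ‖x‖^2)^(1 + 2*θ - 1) = (1 - ‖x‖^2)^(1 + 2*θ - 2) * (1 - ‖x‖^2) := by
    rw [show (1 + 2*θ - 1 : ℝ) = (1 + 2*θ - 2) + 1 by ring, Real.rpow_add_one ht.ne']
  have h1 : (1 - ‖x‖^2)^(1 + 2*θ) = (1 - ‖x‖^2)^(1 + 2*θ - 2) * (1 - ‖x‖^2) * (1 - ‖x‖^2) := by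
    rw [show (1 + 2*θ : ℝ) = (1 + 2*θ - 2) + 1 + 1 by ring, Real.rpow_add_one ht.ne',
      Real.rpow_add_one ht.ne']
    norm_num
    exact Or.inl (by congr 1; ring)
  rw [h1, h2]
  push_cast
  ring
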